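/- Let r be the substitution on {0,1,2} with r(0) = 012, r(1) = 012, r(2) = 01, let u be the substitution on {0,1} with u(0) = 01, u(1) = 0010, and let s be the letter-to-letter map with s(0) = s(2) = 0 and s(1) = 1, all extended to words by concatenation. Then for every n ≥ 1, u^n(0) = s(r^{n−1}(01)) and u^n(1) = s(r^{n−1}(2012)). -/

import Mathlib

/-- The substitution `u` with `u(0) = 01` and `u(1) = 0010`. -/
def usub : ℕ → List ℕ
  | 0 => [0, 1]
  | 1 => [0, 0, 1, 0]
  | _ => []

/-- `u` extended to words by concatenation. -/
def uapp (w : List ℕ) : List ℕ := w.flatMap usub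

/-- The substitution `r` with `r(0) = 012`, `r(1) = 012`, `r(2) = 01`. -/
def rsub : ℕ → List ℕ
  | 0 => [0, 1, 2]
  | 1 => [0, 1, 2]
  | 2 => [0, 1]
  | _ => []

/-- `r` extended to words by concatenation. -/
def rapp (w : List ℕ) : List ℕ := w.flatMap rsub

/-- The coding `s` with `s(0) = s(2) = 0`, `s(1) = 1`, extended letterwise. -/
def smap (w : List ℕ) : List ℕ := w.map (fun a => if a = 1 then 1 else 0)

lemma uapp_append (a b : List ℕ) : uapp (a ++ b) = uapp a ++ uapp b :=
  List.flatMap_append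

lemma rapp_append (a b : List ℕ) : rapp (a ++ b) = rapp a ++ rapp b :=
  List.flatMap_append

lemma smap_append (a b : List ℕ) : smap (a ++ b) = smap a ++ smap b :=
  List.map_append

lemma uapp_iter_append (n : ℕ) (a b : List ℕ) :
    uapp^[n] (a ++ b) = uapp^[n] a ++ uapp^[n] b := by
  induction n generalizing a b with
  | zero => simp
  | succ n ih => simp [Function.iterate_succ_apply, uapp_append, ih]

lemma rapp_iter_append (n : ℕ) (a b : List ℕ) :
    rapp^[n] (a ++ b) = rapp^[n] a ++ rapp^[n] b := by
  induction n generalizing a b with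
  | zero => simp
  | succ n ih => simp [Function.iterate_succ_apply, rapp_append, ih]

theorem u_pow_eq_s_r_pow :
    ∀ n : ℕ, 1 ≤ n →
      uapp^[n] [0] = smap (rapp^[n - 1] [0, 1]) ∧
      uapp^[n] [1] = smap (rapp^[n - 1] [2, 0, 1, 2]) := by
  intro n hn
  induction n with
  | zero => omega
  | succ n ih =>
    rcases Nat.eq_or_lt_of_le hn with h | h
    · simp [← h]
      decide
    · have hn1 : 1 ≤ n := by omega
      obtain ⟨h0, h1⟩ := ih hn1
      obtain ⟨m, rfl⟩ : ∃ m, n = m + 1 := ⟨n - 1, by omega⟩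
      simp only [Nat.add_sub_cancel] at h0 h1 ⊢
      constructor
      · have e1 : uapp^[m + 2] [0] = uapp^[m + 1] [0] ++ uapp^[m + 1] [1] := by
          rw [Function.iterate_succ_apply]
          show uapp^[m+1] (uapp [0]) = _
          have : uapp [0] = [0] ++ [1] := by decide
          rw [this, uapp_iter_append]
        have e2 : rapp^[m + 1] [0, 1] = rapp^[m] [0, 1] ++ rapp^[m] [2, 0, 1, 2] := by
          rw [Function.iterate_succ_apply]
          show rapp^[m] (rapp [0, 1]) = _
          have : rapp [0, 1] = [0, 1] ++ [2, 0, 1, 2] := by decide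
          rw [this, rapp_iter_append]
        rw [e1, e2, smap_append, h0, h1]
      · have e1 : uapp^[m + 2] [1]
            = uapp^[m + 1] [0] ++ (uapp^[m + 1] [0] ++ (uapp^[m + 1] [1] ++ uapp^[m + 1] [0])) := by
          rw [Function.iterate_succ_apply]
          show uapp^[m+1] (uapp [1]) = _
          have : uapp [1] = [0] ++ ([0] ++ ([1] ++ [0])) := by decide
          rw [this, uapp_iter_append, uapp_iter_append, uapp_iter_append]
        have e2 : rapp^[m + 1] [2, 0, 1, 2]
            = rapp^[m] [0, 1] ++ (rapp^[m] [0, 1] ++ (rapp^[m] [2, 0, 1, 2] ++ rapp^[m] [0, 1])) := by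
          rw [Function.iterate_succ_apply]
          show rapp^[m] (rapp [2, 0, 1, 2]) = _
          have : rapp [2, 0, 1, 2] = [0, 1] ++ ([0, 1] ++ ([2, 0, 1, 2] ++ [0, 1])) := by decide
          rw [this, rapp_iter_append, rapp_iter_append, rapp_iter_append]
        rw [e1, e2, smap_append, smap_append, smap_append, h0, h1]
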